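/- For every n ≥ 3, the set 𝒬ₙ of vectors Γ ∈ (0, ∞)ⁿ that possess a thin vorticity — i.e., for which there exists an index k such that the numbers {Γᵢ}_{i≠k} are commensurable and Γ_k ≤ κ(Γ₁, …, Γ_{k−1}, Γ_{k+1}, …, Γₙ) — has n-dimensional Lebesgue measure zero. -/

import Mathlib

/-- For `n ≥ 3`, the set `𝒬ₙ` of positive vorticity vectors possessing a
thin vorticity (an index `k` such that the `Γ i`, `i ≠ k`, are commensurable, i.e.
`Γ i = β * l i` with `β > 0`, `l i ∈ ℕ₊`, and `Γ k ≤ κ = β * gcd {l i}_{i ≠ k}`) has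
`n`-dimensional Lebesgue measure zero. -/
theorem stmt7 (n : ℕ) (hn : 3 ≤ n) :
    MeasureTheory.volume
      {Γ : Fin n → ℝ | (∀ i, 0 < Γ i) ∧
        ∃ k : Fin n, ∃ β : ℝ, 0 < β ∧ ∃ l : Fin n → ℕ,
          (∀ i ∈ Finset.univ.erase k, 0 < l i ∧ Γ i = β * l i) ∧
          Γ k ≤ β * (((Finset.univ.erase k).gcd l : ℕ) : ℝ)} = 0 := by
  apply MeasureTheory.measure_mono_null
    (t := ⋃ (i : Fin n) (j : Fin n) (_ : i ≠ j) (q : ℚ),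
      {Γ : Fin n → ℝ | Γ i = (q : ℝ) * Γ j})
  · rintro Γ ⟨hpos, k, β, hβ, l, hl, -⟩
    obtain ⟨i, hi, j, hj, hij⟩ :
        ∃ i ∈ Finset.univ.erase k, ∃ j ∈ Finset.univ.erase k, i ≠ j := by
      apply Finset.one_lt_card.mp
      have : (Finset.univ.erase k).card = n - 1 := by
        rw [Finset.card_erase_of_mem (Finset.mem_univ k), Finset.card_univ, Fintype.card_fin]
      omega
    obtain ⟨hli, hΓi⟩ := hl i hi
    obtain ⟨hlj, hΓj⟩ := hl j hj
    refine Set.mem_iUnion.mpr ⟨i, Set.mem_iUnion.mpr ⟨j, Set.mem_iUnion.mpr ⟨hij,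
      Set.mem_iUnion.mpr ⟨(l i : ℚ) / (l j : ℚ), ?_⟩⟩⟩⟩
    have hljr : ((l j : ℚ) : ℝ) ≠ 0 := by positivity
    simp only [Set.mem_setOf_eq, hΓi, hΓj]
    push_cast
    field_simp
  · refine MeasureTheory.measure_iUnion_null fun i =>
      MeasureTheory.measure_iUnion_null fun j =>
      MeasureTheory.measure_iUnion_null fun hij =>
      MeasureTheory.measure_iUnion_null fun q => ?_
    have hset : {Γ : Fin n → ℝ | Γ i = (q : ℝ) * Γ j} =
        (LinearMap.ker ((LinearMap.proj i : (Fin n → ℝ) →ₗ[ℝ] ℝ)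
          - (q : ℝ) • (LinearMap.proj j : (Fin n → ℝ) →ₗ[ℝ] ℝ)) : Set (Fin n → ℝ)) := by
      ext Γ
      simp only [SetLike.mem_coe, LinearMap.mem_ker, LinearMap.sub_apply, LinearMap.smul_apply,
        LinearMap.proj_apply, smul_eq_mul, Set.mem_setOf_eq]
      constructor <;> intro h <;> linarith
    rw [hset]
    apply MeasureTheory.Measure.addHaar_submodule
    intro h
    have h0 := LinearMap.ker_eq_top.mp h
    have := congrArg (fun (f : (Fin n → ℝ) →ₗ[ℝ] ℝ) => f (Pi.single i 1)) h0
    simp [Pi.single_apply, hij.symm] at this
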